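/- Let n ≥ 1 and let k ∈ ℕ^{n+1} with k_0 = 0, and let k̃ = (k_1,…,k_n,0) be the left shift of k. Then for every x ∈ [-1,1]^{n+1}: b(x,k) = Σ_{m ∈ ℕ^{n+1}, m_j ≤ min{k_j, k̃_j} for all j} Π_{j=0}^{n} C(k_j,m_j) · C(k̃_j,m_j) · (-x_j)^{k̃_j - m_j} · x_j^{k_j - m_j} · (1 - x_j^2)^{m_j} · √(1 - x_j^2). -/

import Mathlib

/-- Amplitude factor `g^{(p,q)}`. -/
noncomputable def ampG (p q : ℤ) (x : ℝ) : ℝ :=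
  if p < 0 ∨ q < 0 then 0
  else Real.sqrt (1 - x ^ 2) * ∑ j ∈ Finset.Icc 0 (min p q).toNat,
    (-1 : ℝ) ^ (q.toNat - j) * (p.toNat.choose j : ℝ) * (q.toNat.choose j : ℝ) *
      x ^ (p.toNat + q.toNat - 2 * j) * (1 - x ^ 2) ^ j

/-- Amplitude quasi-polynomial `b(x,k)`. -/
noncomputable def ampB (n : ℕ) (x : Fin (n+1) → ℝ) (k : Fin (n+1) → ℕ) : ℝ :=
  (if k 0 = 0 then (1:ℝ) else 0) * Real.sqrt (1 - x (Fin.last n) ^ 2) *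
    x (Fin.last n) ^ k (Fin.last n) *
    ∏ j : Fin n, ampG (k j.castSucc) (k j.succ) (x j.castSucc)
/-- Left shift `k̃ = (k_1,…,k_n,0)` of a lattice point `k ∈ ℕ^{n+1}`. -/
def lshift (n : ℕ) (k : Fin (n+1) → ℕ) (j : Fin (n+1)) : ℕ :=
  if h : (j : ℕ) < n then k ⟨(j : ℕ) + 1, by omega⟩ else 0

lemma ampG_nat (p q : ℕ) (x : ℝ) :
    ampG p q x = ∑ m ∈ Finset.Icc 0 (min p q),
      (p.choose m : ℝ) * (q.choose m : ℝ) * (-x) ^ (q - m) * x ^ (p - m) *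
        (1 - x ^ 2) ^ m * Real.sqrt (1 - x ^ 2) := by
  rw [ampG, if_neg (by simp), Finset.mul_sum]
  have hmin : ((min (p:ℤ) q).toNat) = min p q := by
    rw [← Nat.cast_min, Int.toNat_natCast]
  rw [hmin]
  refine Finset.sum_congr rfl fun m hm => ?_
  simp only [Finset.mem_Icc] at hm
  have hmp : m ≤ p := le_trans hm.2 (min_le_left _ _)
  have hmq : m ≤ q := le_trans hm.2 (min_le_right _ _)
  simp only [Int.toNat_natCast]
  have h2 : p + q - 2 * m = (p - m) + (q - m) := by omega
  rw [h2, pow_add, neg_pow]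
  ring

/-- explicit multinomial expansion of the amplitude quasi-polynomial `b(x,k)`. -/
theorem amplitude_quasipolynomial_expansion (n : ℕ) (hn : 1 ≤ n) (k : Fin (n+1) → ℕ)
    (hk0 : k 0 = 0) (x : Fin (n+1) → ℝ) (hx : ∀ j, x j ∈ Set.Icc (-1 : ℝ) 1) :
    ampB n x k =
      ∑ m ∈ Fintype.piFinset (fun j : Fin (n+1) =>
          Finset.Icc 0 (min (k j) (lshift n k j))),
        ∏ j : Fin (n+1),
          ((k j).choose (m j) : ℝ) * ((lshift n k j).choose (m j) : ℝ) *
            (-(x j)) ^ (lshift n k j - m j) * (x j) ^ (k j - m j) *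
            (1 - x j ^ 2) ^ (m j) * Real.sqrt (1 - x j ^ 2) := by
  rw [← Finset.prod_univ_sum (t := fun j : Fin (n+1) =>
      Finset.Icc 0 (min (k j) (lshift n k j)))
    (f := fun (j : Fin (n+1)) (mj : ℕ) =>
      ((k j).choose mj : ℝ) * ((lshift n k j).choose mj : ℝ) *
        (-(x j)) ^ (lshift n k j - mj) * (x j) ^ (k j - mj) *
        (1 - x j ^ 2) ^ mj * Real.sqrt (1 - x j ^ 2)), Fin.prod_univ_castSucc]
  have hlast : lshift n k (Fin.last n) = 0 := by simp [lshift]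
  have hprod : (∏ j : Fin n, ampG (k j.castSucc) (k j.succ) (x j.castSucc))
      = ∏ j : Fin n, ∑ m ∈ Finset.Icc 0 (min (k j.castSucc) (lshift n k j.castSucc)),
          ((k j.castSucc).choose m : ℝ) * ((lshift n k j.castSucc).choose m : ℝ) *
            (-(x j.castSucc)) ^ (lshift n k j.castSucc - m) *
            (x j.castSucc) ^ (k j.castSucc - m) *
            (1 - x j.castSucc ^ 2) ^ m * Real.sqrt (1 - x j.castSucc ^ 2) := by
    refine Finset.prod_congr rfl fun j _ => ?_
    have hsh : lshift n k j.castSucc = k j.succ := by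
      simp only [lshift, Fin.coe_castSucc, j.isLt, dif_pos]
      congr 1
    rw [hsh, ampG_nat]
  rw [ampB, hk0, if_pos rfl, hprod]
  rw [hlast]
  simp only [Nat.min_zero, Finset.Icc_self, Finset.sum_singleton, Nat.choose_zero_right,
    Nat.sub_zero, pow_zero, Nat.choose_self, Nat.cast_one]
  ring
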